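/- Let a, b be parameters with 2b−1 not zero or a negative integer. Define c₀ = 1, c₁ = 2a/(2b−1), and for n ≥ 2, cₙ = [ (n+2(a−1))(n+2(a−b)) c_{n−2} + 2(n+a−1) c_{n−1} ] / (n(n+2b−2)). Then for all n ≥ 0, c_{2n} = (a)_n (a−b+3/2)_n / (n! (b−1/2)_n) and c_{2n+1} = c₁ · (a+1)_n (a−b+3/2)_n / (n! (b+1/2)_n). -/

import Mathlib

open scoped Nat

/-- Pochhammer symbol (rising factorial). -/
noncomputable def poch (a : ℝ) (n : ℕ) : ℝ := (ascPochhammer ℝ n).eval a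

/-- Gauss hypergeometric series ₂F₁(a,b;c;z). -/
noncomputable def F (a b c z : ℝ) : ℝ :=
  ∑' n : ℕ, poch a n * poch b n / (poch c n * (n ! : ℝ)) * z ^ n

lemma poch_zero (x : ℝ) : poch x 0 = 1 := by simp [poch]
lemma poch_succ (x : ℝ) (n : ℕ) : poch x (n+1) = poch x n * (x + n) := by
  simp [poch, ascPochhammer_succ_right]
lemma poch_succ_left (x : ℝ) (n : ℕ) : poch x (n+1) = x * poch (x+1) n := by
  simp [poch, ascPochhammer_succ_left]

theorem frobenius_coeffs_second_case_lambda_zero (a b : ℝ)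
    (hb : ∀ k : ℕ, 2 * b - 1 + (k : ℝ) ≠ 0)
    (c : ℕ → ℝ) (hc0 : c 0 = 1) (hc1 : c 1 = 2 * a / (2 * b - 1))
    (hrec : ∀ n : ℕ, 2 ≤ n → c n =
      (((n : ℝ) + 2 * (a - 1)) * ((n : ℝ) + 2 * (a - b)) * c (n - 2)
        + 2 * ((n : ℝ) + a - 1) * c (n - 1)) / ((n : ℝ) * ((n : ℝ) + 2 * b - 2))) :
    ∀ n : ℕ,
      c (2 * n) = poch a n * poch (a - b + 3/2) n / ((n ! : ℝ) * poch (b - 1/2) n) ∧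
      c (2 * n + 1) =
        c 1 * (poch (a + 1) n * poch (a - b + 3/2) n / ((n ! : ℝ) * poch (b + 1/2) n)) := by
  have hb' : (2 : ℝ) * b - 1 ≠ 0 := by simpa using hb 0
  have hb2 : b - 1/2 ≠ 0 := by intro h; exact hb' (by linarith)
  have hlin1 : ∀ k : ℕ, b - 1/2 + (k : ℝ) ≠ 0 := by
    intro k h
    exact hb (2*k) (by push_cast; linarith)
  have hlin2 : ∀ k : ℕ, b + 1/2 + (k : ℝ) ≠ 0 := by
    intro k h
    exact hb (2*k+2) (by push_cast; linarith)
  have hQ1 : ∀ n : ℕ, poch (b - 1/2) n ≠ 0 := by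
    intro n
    induction n with
    | zero => simp [poch_zero]
    | succ n ih => rw [poch_succ]; exact mul_ne_zero ih (hlin1 n)
  have hQ2 : ∀ n : ℕ, poch (b + 1/2) n ≠ 0 := by
    intro n
    induction n with
    | zero => simp [poch_zero]
    | succ n ih => rw [poch_succ]; exact mul_ne_zero ih (hlin2 n)
  have hfac : ∀ n : ℕ, (n ! : ℝ) ≠ 0 := fun n => Nat.cast_ne_zero.mpr (Nat.factorial_ne_zero n)
  -- conversion between the two forms of the odd coefficient
  have hconv : ∀ n : ℕ,
      c 1 * (poch (a + 1) n * poch (a - b + 3/2) n / ((n ! : ℝ) * poch (b + 1/2) n))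
        = poch a (n+1) * poch (a - b + 3/2) n / ((n ! : ℝ) * poch (b - 1/2) (n+1)) := by
    intro n
    rw [hc1, poch_succ_left a n, poch_succ_left (b - 1/2) n]
    have h12 : b - 1/2 + 1 = b + 1/2 := by ring
    rw [h12]
    have hbn : (-1:ℝ) + b*2 ≠ 0 := by intro h; exact hb' (by linarith)
    field_simp [hfac n, hQ2 n, hb', hbn, hb2]
  have key : ∀ n : ℕ,
      c (2 * n) = poch a n * poch (a - b + 3/2) n / ((n ! : ℝ) * poch (b - 1/2) n) ∧
      c (2 * n + 1) = poch a (n+1) * poch (a - b + 3/2) n / ((n ! : ℝ) * poch (b - 1/2) (n+1)) := by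
    intro n
    induction n with
    | zero =>
      refine ⟨by simpa [poch_zero] using hc0, ?_⟩
      have h1 : poch a 1 * poch (a - b + 3/2) 0 / ((0! : ℝ) * poch (b - 1/2) 1)
          = a / (b - 1/2) := by
        simp [poch_succ, poch_zero]
      rw [hc1, h1, div_eq_div_iff hb' hb2]
      ring
    | succ n ih =>
      obtain ⟨hE, hO⟩ := ih
      -- cleared (denominator-free) forms of the induction hypotheses
      have hE'' : c (2*n) * ((n ! : ℝ) * poch (b - 1/2) n)
          = poch a n * poch (a - b + 3/2) n := by
        rw [hE, div_mul_cancel₀ _ (mul_ne_zero (hfac n) (hQ1 n))]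
      have hO'' : c (2*n+1) * ((n ! : ℝ) * (poch (b - 1/2) n * (b - 1/2 + (n:ℝ))))
          = poch a n * (a + (n:ℝ)) * poch (a - b + 3/2) n := by
        have := hO
        rw [poch_succ, poch_succ] at this
        rw [this, div_mul_cancel₀ _
          (mul_ne_zero (hfac n) (mul_ne_zero (hQ1 n) (hlin1 n)))]
      -- nonzero denominators
      have hd1 : (2*(n:ℝ)+2) ≠ 0 := by positivity
      have hd2 : (2*(n:ℝ)+2 + 2*b - 2) ≠ 0 := by
        intro h; exact hb (2*n+1) (by push_cast; linarith)
      have hd3 : (2*(n:ℝ)+3) ≠ 0 := by positivity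
      have hd4 : (2*(n:ℝ)+3 + 2*b - 2) ≠ 0 := by
        intro h; exact hb (2*n+2) (by push_cast; linarith)
      -- cleared form of the recurrence at 2n+2
      have h2 := hrec (2*n+2) (by omega)
      rw [show (2*n+2 : ℕ) - 2 = 2*n from by omega,
          show (2*n+2 : ℕ) - 1 = 2*n+1 from by omega,
          eq_div_iff (by push_cast; exact mul_ne_zero hd1 hd2)] at h2
      push_cast at h2
      -- the even-index identity, denominator-cleared and multiplied by D
      have big : (c (2*n+2) * (((n:ℝ)+1) * (n ! : ℝ)
              * (poch (b - 1/2) n * (b - 1/2 + (n:ℝ)))))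
              * ((2*(n:ℝ)+2) * (2*(n:ℝ)+2 + 2*b - 2))
          = (poch a n * (a + (n:ℝ))
              * (poch (a - b + 3/2) n * (a - b + 3/2 + (n:ℝ))))
              * ((2*(n:ℝ)+2) * (2*(n:ℝ)+2 + 2*b - 2)) := by
        linear_combination
          (((n:ℝ)+1) * (n ! : ℝ) * poch (b - 1/2) n * (b - 1/2 + (n:ℝ))) * h2
          + ((2*(n:ℝ)+2+2*(a-1)) * (2*(n:ℝ)+2+2*(a-b)) * ((n:ℝ)+1)
              * (b - 1/2 + (n:ℝ))) * hE''
          + (2*(2*(n:ℝ)+2+a-1) * ((n:ℝ)+1)) * hO''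
      have hEc := mul_right_cancel₀ (mul_ne_zero hd1 hd2) big
      have hE1 : c (2*(n+1)) = poch a (n+1) * poch (a - b + 3/2) (n+1)
          / (((n+1)! : ℝ) * poch (b - 1/2) (n+1)) := by
        rw [show 2*(n+1) = 2*n+2 from by ring,
          eq_div_iff (mul_ne_zero (hfac (n+1)) (hQ1 (n+1)))]
        simp only [poch_succ, Nat.factorial_succ]
        push_cast
        linear_combination hEc
      refine ⟨hE1, ?_⟩
      -- cleared form of the recurrence at 2n+3
      have h3 := hrec (2*n+3) (by omega)
      rw [show (2*n+3 : ℕ) - 2 = 2*n+1 from by omega,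
          show (2*n+3 : ℕ) - 1 = 2*n+2 from by omega,
          eq_div_iff (by push_cast; exact mul_ne_zero hd3 hd4)] at h3
      push_cast at h3
      have big2 : (c (2*n+3) * (((n:ℝ)+1) * (n ! : ℝ)
              * (poch (b - 1/2) n * ((b - 1/2 + (n:ℝ)) * (b - 1/2 + ((n:ℝ)+1))))))
              * ((2*(n:ℝ)+3) * (2*(n:ℝ)+3 + 2*b - 2))
          = (poch a n * ((a + (n:ℝ)) * (a + ((n:ℝ)+1)))
              * (poch (a - b + 3/2) n * (a - b + 3/2 + (n:ℝ))))
              * ((2*(n:ℝ)+3) * (2*(n:ℝ)+3 + 2*b - 2)) := by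
        linear_combination
          (((n:ℝ)+1) * (n ! : ℝ) * poch (b - 1/2) n * (b - 1/2 + (n:ℝ))
              * (b - 1/2 + ((n:ℝ)+1))) * h3
          + ((2*(n:ℝ)+3+2*(a-1)) * (2*(n:ℝ)+3+2*(a-b)) * ((n:ℝ)+1)
              * (b - 1/2 + ((n:ℝ)+1))) * hO''
          + (2*(2*(n:ℝ)+3+a-1) * (b - 1/2 + ((n:ℝ)+1))) * hEc
      have hOc := mul_right_cancel₀ (mul_ne_zero hd3 hd4) big2
      rw [show 2*(n+1)+1 = 2*n+3 from by ring,
        eq_div_iff (mul_ne_zero (hfac (n+1)) (hQ1 (n+2)))]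
      simp only [poch_succ, Nat.factorial_succ]
      push_cast
      linear_combination hOc
  intro n
  exact ⟨(key n).1, by rw [(key n).2, hconv n]⟩
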